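/- Let (C, R, 𝓡) be a big-step semantics and 𝓡^? its partial-evaluation semantics. For each well-formed infinite proof tree τ in 𝓡^?, there is a sequence (τ_n)_{n∈ℕ} of finite proof trees in 𝓡^?, strictly increasing with respect to the order ⊑, such that τ = ⊔ τ_n. -/

import Mathlib

namespace BigStepMeta

universe u

/-- A judgment `c ⇒ r`: a configuration together with a result. -/
structure Judg (C : Type u) where
  conf : C
  res  : C

/-- A big-step rule: a conclusion configuration plus a nonempty finite list of premises.
The last premise is the continuation; the conclusion judgment is `concl ⇒ (last premise).res`. -/
structure Rule (C : Type u) where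
  concl : C
  premises : List (Judg C)
  ne : premises ≠ []

/-- The last premise (continuation) of a rule. -/
def Rule.lastJ {C : Type u} (ρ : Rule C) : Judg C := ρ.premises.getLast ρ.ne

/-- A big-step semantics `(C, R, 𝓡)`: configurations `C`, results `R ⊆ C`, rules `𝓡`. -/
structure BigStep (C : Type u) where
  R : Set C
  Rules : Set (Rule C)
  concl_not_res : ∀ ρ ∈ Rules, ρ.concl ∉ R
  prem_res : ∀ ρ ∈ Rules, ∀ j ∈ ρ.premises, j.res ∈ R

variable {C : Type u}

/-- Condition BP: the number of premises of rules is bounded. -/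
def BigStep.BP (S : BigStep C) : Prop :=
  ∃ b : ℕ, ∀ ρ ∈ S.Rules, ρ.premises.length ≤ b

/-- Inductive derivability `⊢_𝓡 c ⇒ r`: there is a finite proof tree.
For each result `r ∈ R` there is an implicit axiom `r ⇒ r`. -/
inductive Derives (S : BigStep C) : C → C → Prop
  | ax {r : C} : r ∈ S.R → Derives S r r
  | rule {ρ : Rule C} : ρ ∈ S.Rules →
      (∀ j ∈ ρ.premises, Derives S j.conf j.res) →
      Derives S ρ.concl ρ.lastJ.res

/-! ## Traces -/

/-- A finite or infinite trace of configurations. -/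
inductive Trace (C : Type u) where
  | fin : List C → Trace C
  | inf : (ℕ → C) → Trace C

/-- Concatenation of a finite list with an infinite sequence. -/
def appendInf (l : List C) (f : ℕ → C) : ℕ → C :=
  fun n => if h : n < l.length then l.get ⟨n, h⟩ else f (n - l.length)

/-- The finite trace `t_k · R(j_k)` associated to a premise and a chosen finite trace. -/
def finPart (p : Judg C × List C) : List C := p.2 ++ [p.1.res]

/-- The rule instances of the trace semantics `𝓡^tr`: a conclusion `c ⇒ t`
together with its list of premises. -/
inductive TrRule (S : BigStep C) : C → Trace C → List (C × Trace C) → Prop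
  | ax {r : C} : r ∈ S.R → TrRule S r (.fin [r]) []
  | intro {ρ : Rule C} {ts : List (List C)} :
      ρ ∈ S.Rules → ts.length = ρ.premises.length →
      TrRule S ρ.concl
        (.fin (ρ.concl :: ((ρ.premises.zip ts).map finPart).flatten))
        ((ρ.premises.zip ts).map (fun p => (p.1.conf, Trace.fin (finPart p))))
  | div {ρ : Rule C} {pre rest : List (Judg C)} {j : Judg C} {ts : List (List C)} {f : ℕ → C} :
      ρ ∈ S.Rules → ρ.premises = pre ++ j :: rest →
      ts.length = pre.length →
      TrRule S ρ.concl
        (.inf (appendInf (ρ.concl :: ((pre.zip ts).map finPart).flatten) f))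
        (((pre.zip ts).map (fun p => (p.1.conf, Trace.fin (finPart p)))) ++
          [(j.conf, Trace.inf f)])

/-- `⊢_{𝓡^tr} c ⇒ t` by a finite derivation (inductive interpretation of `𝓡^tr`). -/
inductive TrDerivesFin (S : BigStep C) : C → Trace C → Prop
  | step {c : C} {t : Trace C} {prems : List (C × Trace C)} :
      TrRule S c t prems →
      (∀ p ∈ prems, TrDerivesFin S p.1 p.2) →
      TrDerivesFin S c t

/-- `⊢_{𝓡^tr} c ⇒ t`: coinductive interpretation of `𝓡^tr`, i.e. existence of a possibly
infinite proof tree, expressed as membership in some backward-closed (consistent) relation. -/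
def TrDerives (S : BigStep C) (c : C) (t : Trace C) : Prop :=
  ∃ X : C → Trace C → Prop,
    (∀ c' t', X c' t' → ∃ prems, TrRule S c' t' prems ∧ ∀ p ∈ prems, X p.1 p.2) ∧
    X c t

/-! ## Wrong -/

/-- There is a rule with conclusion configuration `c`, first premises `pre`, whose next
premise has configuration `c'` and result `r` (i.e. a rule `ρ' ∼ᵢ ρ` with `R(ρ', i) = r`). -/
def HasContinuation (S : BigStep C) (c : C) (pre : List (Judg C)) (c' r : C) : Prop :=
  ∃ ρ' ∈ S.Rules, ∃ j' : Judg C, ∃ rest' : List (Judg C),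
    ρ'.premises = pre ++ j' :: rest' ∧ ρ'.concl = c ∧ j'.conf = c' ∧ j'.res = r

/-- Derivability in the wrong semantics `𝓡^wr`; `none` plays the role of `wrong`. -/
inductive DerivesW (S : BigStep C) : C → Option C → Prop
  | ax {r : C} : r ∈ S.R → DerivesW S r (some r)
  | rule {ρ : Rule C} : ρ ∈ S.Rules →
      (∀ j ∈ ρ.premises, DerivesW S j.conf (some j.res)) →
      DerivesW S ρ.concl (some ρ.lastJ.res)
  | wrong_intro {ρ : Rule C} {pre rest : List (Judg C)} {j : Judg C} {r : C} :
      ρ ∈ S.Rules → ρ.premises = pre ++ j :: rest → r ∈ S.R →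
      ¬ HasContinuation S ρ.concl pre j.conf r →
      (∀ j' ∈ pre, DerivesW S j'.conf (some j'.res)) →
      DerivesW S j.conf (some r) →
      DerivesW S ρ.concl none
  | wrong_ax {c : C} : c ∉ S.R → (¬ ∃ ρ ∈ S.Rules, ρ.concl = c) →
      DerivesW S c none
  | wrong_prop {ρ : Rule C} {pre rest : List (Judg C)} {j : Judg C} :
      ρ ∈ S.Rules → ρ.premises = pre ++ j :: rest →
      (∀ j' ∈ pre, DerivesW S j'.conf (some j'.res)) →
      DerivesW S j.conf none →
      DerivesW S ρ.concl none

/-! ## Indexed predicates and soundness conditions -/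

variable {I : Type u}

/-- `c ∈ Π`, i.e. `c ∈ Π_ι` for some index `ι`. -/
def InPred (P : I → Set C) (c : C) : Prop := ∃ i : I, c ∈ P i

/-- Condition S1 (local preservation). -/
def LocalPres (S : BigStep C) (P : I → Set C) : Prop :=
  ∀ ρ ∈ S.Rules, ∀ i : I, ρ.concl ∈ P i →
    ∃ f : ℕ → I, f (ρ.premises.length - 1) = i ∧
      ∀ (k : ℕ) (hk : k < ρ.premises.length),
        (∀ (h : ℕ) (hh : h < k), (ρ.premises.get ⟨h, hh.trans hk⟩).res ∈ P (f h)) →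
        (ρ.premises.get ⟨k, hk⟩).conf ∈ P (f k)

/-- Condition S2 (∃-progress). -/
def ExProgress (S : BigStep C) (P : I → Set C) : Prop :=
  ∀ c : C, InPred P c → c ∉ S.R → ∃ ρ ∈ S.Rules, ρ.concl = c

/-- Condition S3 (∀-progress). -/
def AllProgress (S : BigStep C) (P : I → Set C) : Prop :=
  ∀ ρ ∈ S.Rules, InPred P ρ.concl →
    ∀ (pre : List (Judg C)) (j : Judg C) (rest : List (Judg C)),
      ρ.premises = pre ++ j :: rest →
      (∀ j' ∈ pre, Derives S j'.conf j'.res) →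
      ∀ r ∈ S.R, Derives S j.conf r →
      HasContinuation S ρ.concl pre j.conf r

/-- Condition S4 (progress-may). -/
def ProgressMay (S : BigStep C) (P : I → Set C) : Prop :=
  ∀ c : C, InPred P c → c ∉ S.R →
    ∃ ρ ∈ S.Rules, ρ.concl = c ∧
      ∀ (pre : List (Judg C)) (j : Judg C) (rest : List (Judg C)),
        ρ.premises = pre ++ j :: rest →
        (∀ j' ∈ pre, Derives S j'.conf j'.res) →
        ¬ Derives S j.conf j.res →
        ¬ ∃ r : C, Derives S j.conf r

/-! ## Partial evaluation: the inference system `𝓡^?` -/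

/-- The rule instances of the partial-evaluation semantics `𝓡^?`; `none` plays the role
of the unknown result `?`. -/
inductive URule (S : BigStep C) : C → Option C → List (C × Option C) → Prop
  | ax {r : C} : r ∈ S.R → URule S r (some r) []
  | rule {ρ : Rule C} : ρ ∈ S.Rules →
      URule S ρ.concl (some ρ.lastJ.res) (ρ.premises.map (fun j => (j.conf, some j.res)))
  | unk_ax {c : C} : URule S c none []
  | unk {ρ : Rule C} {pre rest : List (Judg C)} {j : Judg C} {r : C} :
      ρ ∈ S.Rules → ρ.premises = pre ++ j :: rest → r ∈ S.R →
      URule S ρ.concl none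
        (pre.map (fun j' => (j'.conf, some j'.res)) ++ [(j.conf, some r)])
  | prop {ρ : Rule C} {pre rest : List (Judg C)} {j : Judg C} :
      ρ ∈ S.Rules → ρ.premises = pre ++ j :: rest →
      URule S ρ.concl none
        (pre.map (fun j' => (j'.conf, some j'.res)) ++ [(j.conf, none)])

/-! ## Possibly infinite trees as partial functions -/

/-- A (possibly infinite) tree labelled by judgments `c ⇒ u`, `u ∈ R ∪ {?}`, given as a
partial function on addresses (lists of positive naturals), with nonempty domain closed
under parents and left siblings. -/
structure PTree (C : Type u) where
  label : List ℕ+ → Option (C × Option C)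
  root_def : label [] ≠ none
  closed : ∀ (α : List ℕ+) (n : ℕ+), label (α ++ [n]) ≠ none → label α ≠ none
  siblings : ∀ (α : List ℕ+) (n k : ℕ+), k ≤ n →
    label (α ++ [n]) ≠ none → label (α ++ [k]) ≠ none

/-- `τ` is a proof tree in `𝓡^?`: at each node, the children are exactly the premises
of a rule of `𝓡^?` with the node's judgment as conclusion. -/
def PTree.IsProofTree (S : BigStep C) (τ : PTree C) : Prop :=
  ∀ (α : List ℕ+) (p : C × Option C), τ.label α = some p →
    ∃ prems : List (C × Option C), URule S p.1 p.2 prems ∧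
      ∀ n : ℕ+, τ.label (α ++ [n]) = prems[(n : ℕ) - 1]?

/-- The order `τ ⊑ τ'` on trees: larger domain, same configurations, and equal subtrees
at nodes whose result is already known (in `R`). -/
def PTree.LE (τ τ' : PTree C) : Prop :=
  ∀ (α : List ℕ+) (p : C × Option C), τ.label α = some p →
    ∃ p' : C × Option C, τ'.label α = some p' ∧ p.1 = p'.1 ∧
      (p.2 ≠ none → ∀ β : List ℕ+, τ.label (α ++ β) = τ'.label (α ++ β))

/-- A tree is finite if its domain is finite. -/
def PTree.Finite (τ : PTree C) : Prop := {α : List ℕ+ | τ.label α ≠ none}.Finite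

/-- A (typically infinite) proof tree is well-formed if at every level there is a node
labelled by an incomplete judgment, and subtrees rooted at complete judgments are finite. -/
def PTree.WellFormed (τ : PTree C) : Prop :=
  (∀ n : ℕ, ∃ (α : List ℕ+) (c : C), α.length = n ∧ τ.label α = some (c, none)) ∧
  (∀ (α : List ℕ+) (c r : C), τ.label α = some (c, some r) →
    {β : List ℕ+ | τ.label (α ++ β) ≠ none}.Finite)

/-! ## Finite proof trees and the reduction relation -/

/-- Finite trees labelled by judgments `c ⇒ u`, `u ∈ R ∪ {?}` (with `none` playing `?`). -/
inductive FTree (C : Type u) where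
  | node : C → Option C → List (FTree C) → FTree C

/-- The judgment at the root of a finite tree. -/
def FTree.judg : FTree C → C × Option C
  | .node c u _ => (c, u)

/-- `τ` is a finite proof tree in the partial-evaluation semantics `𝓡^?`. -/
inductive IsFPT (S : BigStep C) : FTree C → Prop
  | mk {c : C} {u : Option C} {l : List (FTree C)} :
      URule S c u (l.map FTree.judg) →
      (∀ τ ∈ l, IsFPT S τ) →
      IsFPT S (.node c u l)

/-- A finite proof tree is complete if all its judgments have results in `R`. -/
inductive FTree.Complete (S : BigStep C) : FTree C → Prop
  | mk {c : C} {r : C} {l : List (FTree C)} :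
      r ∈ S.R →
      (∀ τ ∈ l, FTree.Complete S τ) →
      FTree.Complete S (.node c (some r) l)

/-- The order `τ ⊑ τ'` on finite trees. -/
inductive FTreeLE : FTree C → FTree C → Prop
  | done {c r : C} {l : List (FTree C)} :
      FTreeLE (.node c (some r) l) (.node c (some r) l)
  | step {c : C} {u' : Option C} {l l₁ l₂ : List (FTree C)} :
      l.length = l₁.length →
      (∀ p ∈ l.zip l₁, FTreeLE p.1 p.2) →
      FTreeLE (.node c none l) (.node c u' (l₁ ++ l₂))

/-- The one-step reduction relation `⇝` on finite proof trees in `𝓡^?`. -/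
inductive Red (S : BigStep C) : FTree C → FTree C → Prop
  /-- The axiom `r ⇒ ?` (with `r ∈ R`) steps to the axiom `r ⇒ r`. -/
  | res {r : C} : r ∈ S.R → Red S (.node r none []) (.node r (some r) [])
  /-- The axiom `c ⇒ ?` steps, for a rule `ρ` with conclusion configuration `c`,
  to the tree applying `prop(ρ,1,?)` to the leaf `c' ⇒ ?`, `c'` the first premise
  configuration of `ρ`. -/
  | start {ρ : Rule C} {j : Judg C} {rest : List (Judg C)} :
      ρ ∈ S.Rules → ρ.premises = j :: rest →
      Red S (.node ρ.concl none []) (.node ρ.concl none [.node j.conf none []])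
  /-- A tree with root `c ⇒ ?` whose children are the first `i` premises of some
  `ρ' ∈ 𝓡` (with `#ρ' = i`, last premise result `r`) steps to the same tree with
  root `c ⇒ r`. -/
  | complete {ρ' : Rule C} {pre : List (Judg C)} {j' : Judg C} {l : List (FTree C)} :
      ρ' ∈ S.Rules → ρ'.premises = pre ++ [j'] →
      l.map FTree.judg = pre.map (fun j => (j.conf, some j.res)) ++ [(j'.conf, some j'.res)] →
      Red S (.node ρ'.concl none l) (.node ρ'.concl (some j'.res) l)
  /-- A tree with root `c ⇒ ?` whose children are the first `i` premises of some
  `ρ' ∈ 𝓡` having an `(i+1)`-th premise steps by adding the leaf for that premise's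
  configuration. -/
  | next {ρ' : Rule C} {pre rest : List (Judg C)} {j' j'' : Judg C} {l : List (FTree C)} :
      ρ' ∈ S.Rules → ρ'.premises = pre ++ j' :: j'' :: rest →
      l.map FTree.judg = pre.map (fun j => (j.conf, some j.res)) ++ [(j'.conf, some j'.res)] →
      Red S (.node ρ'.concl none l) (.node ρ'.concl none (l ++ [.node j''.conf none []]))
  /-- Propagation: a step of the last child is propagated. -/
  | inner {c : C} {l : List (FTree C)} {τ τ' : FTree C} :
      Red S τ τ' →
      Red S (.node c none (l ++ [τ])) (.node c none (l ++ [τ']))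


section Aux

variable {C : Type u}

/-- `Keep τ n α`: every proper prefix of `α` either has length `< n` or carries a
complete (`some`) result. Such addresses survive the depth-`n` truncation. -/
def Keep (τ : PTree C) (n : ℕ) (α : List ℕ+) : Prop :=
  ∀ β : List ℕ+, β <+: α → β ≠ α → β.length < n ∨ ∃ c r, τ.label β = some (c, some r)

lemma keep_mono {τ : PTree C} {m n : ℕ} (h : m ≤ n) {α : List ℕ+} (hk : Keep τ m α) :
    Keep τ n α := by
  intro β h1 h2
  rcases hk β h1 h2 with h' | h'
  · exact Or.inl (h'.trans_le h)
  · exact Or.inr h'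

lemma keep_nil (τ : PTree C) (n : ℕ) : Keep τ n [] := by
  intro β h1 h2
  exact absurd (List.prefix_nil.mp h1) h2

lemma keep_prefix {τ : PTree C} {n : ℕ} {α β : List ℕ+} (hk : Keep τ n α) (h : β <+: α) :
    Keep τ n β := by
  intro γ h1 h2
  rcases eq_or_ne γ α with rfl | hγ
  · exact absurd (h1.eq_of_length (le_antisymm h1.length_le h.length_le)) h2
  · exact hk γ (h1.trans h) hγ

lemma label_append_none {τ : PTree C} {α : List ℕ+} (h : τ.label α = none) :
    ∀ β, τ.label (α ++ β) = none := by
  intro β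
  induction β generalizing α with
  | nil => simpa using h
  | cons m β ih =>
    have h1 : τ.label (α ++ [m]) = none := by
      by_contra hc
      exact (τ.closed α m hc) h
    have := ih (α := α ++ [m]) h1
    simpa using this

lemma some_descendants {S : BigStep C} {τ : PTree C} (hpt : τ.IsProofTree S)
    {α : List ℕ+} {c r : C} (h : τ.label α = some (c, some r)) :
    ∀ β, τ.label (α ++ β) = none ∨ ∃ c' r', τ.label (α ++ β) = some (c', some r') := by
  intro β
  induction β generalizing α c r with
  | nil => exact Or.inr ⟨c, r, by simpa using h⟩
  | cons m β ih =>
    obtain ⟨prems, hur0, hch⟩ := hpt α _ h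
    have hur : URule S c (some r) prems := hur0
    have hm : τ.label (α ++ [m]) = prems[(m : ℕ) - 1]? := hch m
    rcases hp : prems[(m : ℕ) - 1]? with _ | p
    · left
      rw [show α ++ m :: β = (α ++ [m]) ++ β by simp]
      exact label_append_none (hm.trans hp) β
    · have hpmem : p ∈ prems := List.mem_of_getElem? hp
      have hps : ∃ c' r', p = (c', some r') := by
        cases hur with
        | ax _ => simp at hp
        | rule _ =>
          obtain ⟨j, hj, rfl⟩ := List.mem_map.1 hpmem
          exact ⟨_, _, rfl⟩
      obtain ⟨c', r', rfl⟩ := hps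
      have := ih (α := α ++ [m]) (hm.trans hp)
      simpa using this

lemma prefix_concat_cases {α : List ℕ+} {m : ℕ+} {γ : List ℕ+}
    (h : γ <+: α ++ [m]) (hne : γ ≠ α ++ [m]) : γ <+: α := by
  have hlen : γ.length ≤ α.length := by
    have h1 : γ.length ≤ α.length + 1 := by simpa using h.length_le
    rcases lt_or_eq_of_le h1 with h2 | h2
    · omega
    · exact absurd (h.eq_of_length (by simpa using h2)) hne
  exact List.prefix_of_prefix_length_le h (List.prefix_append α [m]) hlen

open Classical in
/-- The label function of the depth-`n` truncation. -/
noncomputable def truncLabel (τ : PTree C) (n : ℕ) (α : List ℕ+) : Option (C × Option C) :=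
  if Keep τ n α then τ.label α else none

lemma truncLabel_pos {τ : PTree C} {n : ℕ} {α : List ℕ+} (h : Keep τ n α) :
    truncLabel τ n α = τ.label α := by
  unfold truncLabel
  exact if_pos h

lemma truncLabel_neg {τ : PTree C} {n : ℕ} {α : List ℕ+} (h : ¬ Keep τ n α) :
    truncLabel τ n α = none := by
  unfold truncLabel
  exact if_neg h

/-- The depth-`n` truncation of a tree. -/
noncomputable def trunc (τ : PTree C) (n : ℕ) : PTree C where
  label := truncLabel τ n
  root_def := by
    rw [truncLabel_pos (keep_nil τ n)]
    exact τ.root_def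
  closed := by
    intro α m h
    have hk : Keep τ n (α ++ [m]) := by
      by_contra hk
      rw [truncLabel_neg hk] at h
      exact h rfl
    rw [truncLabel_pos hk] at h
    rw [truncLabel_pos (keep_prefix hk (List.prefix_append α [m]))]
    exact fun hn => h (label_append_none hn [m])
  siblings := by
    intro α m k hkm h
    have hk : Keep τ n (α ++ [m]) := by
      by_contra hk
      rw [truncLabel_neg hk] at h
      exact h rfl
    rw [truncLabel_pos hk] at h
    have hk' : Keep τ n (α ++ [k]) := by
      intro γ h1 h2
      have hγα : γ <+: α := prefix_concat_cases h1 h2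
      refine hk γ (hγα.trans (List.prefix_append α [m])) ?_
      intro hγ
      have h3 := hγα.length_le
      rw [hγ] at h3
      simp at h3
    rw [truncLabel_pos hk']
    exact τ.siblings α m k hkm h

lemma trunc_label_eq {τ : PTree C} {n : ℕ} {α : List ℕ+} (h : Keep τ n α) :
    (trunc τ n).label α = τ.label α := truncLabel_pos h

lemma trunc_label_none {τ : PTree C} {n : ℕ} {α : List ℕ+} (h : ¬ Keep τ n α) :
    (trunc τ n).label α = none := truncLabel_neg h

lemma keep_of_trunc {τ : PTree C} {n : ℕ} {α : List ℕ+} {p : C × Option C}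
    (h : (trunc τ n).label α = some p) : Keep τ n α := by
  by_contra hk
  rw [trunc_label_none hk] at h
  exact nomatch h

lemma trunc_eq_of_some {S : BigStep C} {τ : PTree C} (hpt : τ.IsProofTree S)
    {n : ℕ} {α : List ℕ+} {c r : C} (hk : Keep τ n α) (h : τ.label α = some (c, some r)) :
    ∀ β, (trunc τ n).label (α ++ β) = τ.label (α ++ β) := by
  intro β
  rcases hl : τ.label (α ++ β) with _ | p
  · by_cases hk2 : Keep τ n (α ++ β)
    · rw [trunc_label_eq hk2, hl]
    · rw [trunc_label_none hk2]
  · rw [trunc_label_eq ?_, hl]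
    intro γ hγ hne
    rcases List.prefix_or_prefix_of_prefix hγ (List.prefix_append α β) with h1 | h1
    · rcases eq_or_ne γ α with rfl | h2
      · exact Or.inr ⟨c, r, h⟩
      · exact hk γ h1 h2
    · obtain ⟨γ', rfl⟩ := h1
      rcases some_descendants hpt h γ' with h2 | ⟨c', r', h2⟩
      · exfalso
        obtain ⟨δ, hδ⟩ := hγ
        rw [← hδ, label_append_none h2 δ] at hl
        exact nomatch hl
      · exact Or.inr ⟨c', r', h2⟩

lemma level_finite {S : BigStep C} {τ : PTree C} (hpt : τ.IsProofTree S) :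
    ∀ k, {α : List ℕ+ | τ.label α ≠ none ∧ α.length = k}.Finite := by
  intro k
  induction k with
  | zero =>
    apply Set.Finite.subset (Set.finite_singleton ([] : List ℕ+))
    rintro α ⟨-, h⟩
    simpa [List.length_eq_zero_iff] using h
  | succ k ih =>
    have hsub : {α : List ℕ+ | τ.label α ≠ none ∧ α.length = k + 1} ⊆
        ⋃ β ∈ {α : List ℕ+ | τ.label α ≠ none ∧ α.length = k},
          (fun m : ℕ+ => β ++ [m]) '' {m : ℕ+ | τ.label (β ++ [m]) ≠ none} := by
      rintro α ⟨h1, h2⟩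
      have hne : α ≠ [] := by intro h; simp [h] at h2
      have heq : α.dropLast ++ [α.getLast hne] = α := List.dropLast_append_getLast hne
      refine Set.mem_biUnion (x := α.dropLast) ⟨?_, ?_⟩ ?_
      · have := τ.closed α.dropLast (α.getLast hne)
        rw [heq] at this
        exact this h1
      · have : α.dropLast.length = α.length - 1 := List.length_dropLast
        omega
      · exact ⟨α.getLast hne, by show τ.label (α.dropLast ++ [α.getLast hne]) ≠ none; rw [heq]; exact h1, heq⟩
    refine Set.Finite.subset (Set.Finite.biUnion ih ?_) hsub
    intro β hβ
    apply Set.Finite.image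
    obtain ⟨p, hp⟩ := Option.ne_none_iff_exists'.mp hβ.1
    obtain ⟨prems, -, hch⟩ := hpt β p hp
    have hinj : Set.InjOn (fun m : ℕ+ => (m : ℕ))
        ((fun m : ℕ+ => (m : ℕ)) ⁻¹' Set.Iic prems.length) :=
      fun a _ b _ h => PNat.coe_injective h
    refine Set.Finite.subset (Set.Finite.preimage hinj (Set.finite_Iic prems.length)) ?_
    intro m hm
    simp only [Set.mem_setOf_eq] at hm
    rw [hch m] at hm
    have hlt : (m : ℕ) - 1 < prems.length := by
      by_contra hc
      rw [List.getElem?_eq_none (by omega)] at hm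
      exact hm rfl
    have hm1 := m.one_le
    simp only [Set.mem_preimage, Set.mem_Iic]
    omega

lemma trunc_finite {S : BigStep C} {τ : PTree C} (hpt : τ.IsProofTree S)
    (hwf : τ.WellFormed) (n : ℕ) : (trunc τ n).Finite := by
  have hsub : {α : List ℕ+ | (trunc τ n).label α ≠ none} ⊆
      (⋃ k ∈ Finset.range (n + 1), {α : List ℕ+ | τ.label α ≠ none ∧ α.length = k}) ∪
      ⋃ β ∈ {β : List ℕ+ | (∃ c r, τ.label β = some (c, some r)) ∧ β.length = n},
        (fun γ => β ++ γ) '' {γ : List ℕ+ | τ.label (β ++ γ) ≠ none} := by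
    intro α hα
    simp only [Set.mem_setOf_eq] at hα
    have hk : Keep τ n α := by
      by_contra hk
      rw [trunc_label_none hk] at hα
      exact hα rfl
    rw [trunc_label_eq hk] at hα
    by_cases hlen : α.length ≤ n
    · left
      exact Set.mem_biUnion (Finset.mem_range.mpr (by omega)) ⟨hα, rfl⟩
    · right
      have hpre : α.take n <+: α := List.take_prefix n α
      have hβlen : (α.take n).length = n := by
        rw [List.length_take]; omega
      have hβne : α.take n ≠ α := by
        intro h
        rw [h] at hβlen
        omega
      rcases hk (α.take n) hpre hβne with h1 | h1
      · omega
      · refine Set.mem_biUnion ⟨h1, hβlen⟩ ?_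
        exact ⟨α.drop n, by show τ.label (α.take n ++ α.drop n) ≠ none; rw [List.take_append_drop]; exact hα, List.take_append_drop n α⟩
  refine Set.Finite.subset (Set.Finite.union ?_ ?_) hsub
  · exact Set.Finite.biUnion (Finset.finite_toSet (Finset.range (n + 1))) (fun k _ => level_finite hpt k)
  · refine Set.Finite.biUnion ?_ ?_
    · exact Set.Finite.subset (level_finite hpt n) (by
        rintro β ⟨⟨c, r, h⟩, h2⟩
        exact ⟨by rw [h]; simp, h2⟩)
    · rintro β ⟨⟨c, r, h⟩, -⟩
      exact Set.Finite.image _ (hwf.2 β c r h)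

lemma trunc_isProofTree {S : BigStep C} {τ : PTree C} (hpt : τ.IsProofTree S) (n : ℕ) :
    (trunc τ n).IsProofTree S := by
  rintro α ⟨c, u⟩ hp
  have hk : Keep τ n α := keep_of_trunc hp
  rw [trunc_label_eq hk] at hp
  obtain ⟨prems, hur, hch⟩ := hpt α _ hp
  rcases u with _ | r
  · by_cases hlen : α.length < n
    · refine ⟨prems, hur, fun m => ?_⟩
      have hkm : Keep τ n (α ++ [m]) := by
        intro γ hγ hne
        have hγα := prefix_concat_cases hγ hne
        rcases eq_or_ne γ α with rfl | h2
        · exact Or.inl hlen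
        · exact hk γ hγα h2
      rw [trunc_label_eq hkm]
      exact hch m
    · refine ⟨[], URule.unk_ax, fun m => ?_⟩
      rw [trunc_label_none ?_]
      · simp
      · intro hkm
        rcases hkm α (List.prefix_append α [m]) (by simp) with h | ⟨c', r', h⟩
        · omega
        · rw [hp] at h
          simp at h
  · refine ⟨prems, hur, fun m => ?_⟩
    rw [trunc_eq_of_some hpt hk hp [m]]
    exact hch m

lemma trunc_le_succ {S : BigStep C} {τ : PTree C} (hpt : τ.IsProofTree S) (n : ℕ) :
    PTree.LE (trunc τ n) (trunc τ (n + 1)) := by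
  rintro α ⟨c, u⟩ hp
  have hk : Keep τ n α := keep_of_trunc hp
  rw [trunc_label_eq hk] at hp
  have hk' : Keep τ (n + 1) α := keep_mono (by omega) hk
  refine ⟨(c, u), by rw [trunc_label_eq hk']; exact hp, rfl, ?_⟩
  intro hu β
  rcases u with _ | r
  · exact absurd rfl hu
  · rw [trunc_eq_of_some hpt hk hp β, trunc_eq_of_some hpt hk' hp β]

lemma trunc_le {S : BigStep C} {τ : PTree C} (hpt : τ.IsProofTree S) (n : ℕ) :
    PTree.LE (trunc τ n) τ := by
  rintro α ⟨c, u⟩ hp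
  have hk : Keep τ n α := keep_of_trunc hp
  rw [trunc_label_eq hk] at hp
  refine ⟨(c, u), hp, rfl, ?_⟩
  intro hu β
  rcases u with _ | r
  · exact absurd rfl hu
  · exact trunc_eq_of_some hpt hk hp β

lemma trunc_ne_succ {S : BigStep C} {τ : PTree C} (hpt : τ.IsProofTree S)
    (hwf : τ.WellFormed) (n : ℕ) : trunc τ n ≠ trunc τ (n + 1) := by
  obtain ⟨α, c, hlen, hlab⟩ := hwf.1 (n + 1)
  intro heq
  have h1 : (trunc τ (n + 1)).label α = some (c, none) := by
    rw [trunc_label_eq ?_]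
    · exact hlab
    · intro β hβ hne
      left
      have h2 : β.length ≤ α.length := hβ.length_le
      have h3 : β.length ≠ α.length := fun h => hne (hβ.eq_of_length h)
      omega
  have h2 : (trunc τ n).label α = none := by
    apply trunc_label_none
    intro hk
    have hpre : α.take n <+: α := List.take_prefix n α
    have hβlen : (α.take n).length = n := by rw [List.length_take]; omega
    have hβne : α.take n ≠ α := by
      intro h
      rw [h] at hβlen
      omega
    rcases hk (α.take n) hpre hβne with h | ⟨c', r', h⟩
    · omega
    · rcases some_descendants hpt h (α.drop n) with h' | ⟨c'', r'', h'⟩ <;>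
        rw [List.take_append_drop, hlab] at h' <;> simp at h'
  rw [heq, h1] at h2
  exact nomatch h2

end Aux


/-- Proposition `pt-seq` (3): every well-formed infinite proof tree
in `𝓡^?` is the least upper bound of a strictly `⊑`-increasing sequence of finite
proof trees. -/
theorem statement15 {C : Type u} (S : BigStep C) (τ : PTree C)
    (hpt : τ.IsProofTree S) (hinf : ¬ τ.Finite) (hwf : τ.WellFormed) :
    ∃ τs : ℕ → PTree C,
      (∀ n : ℕ, (τs n).Finite ∧ (τs n).IsProofTree S) ∧
      (∀ n : ℕ, PTree.LE (τs n) (τs (n + 1)) ∧ τs n ≠ τs (n + 1)) ∧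
      (∀ n : ℕ, PTree.LE (τs n) τ) ∧
      (∀ τ' : PTree C, (∀ n : ℕ, PTree.LE (τs n) τ') → PTree.LE τ τ') := by
  refine ⟨fun n => trunc τ n, fun n => ⟨trunc_finite hpt hwf n, trunc_isProofTree hpt n⟩,
    fun n => ⟨trunc_le_succ hpt n, trunc_ne_succ hpt hwf n⟩, fun n => trunc_le hpt n, ?_⟩
  intro τ' h
  rintro α ⟨c, u⟩ hp
  have hk : Keep τ (α.length + 1) α := by
    intro β hβ hne
    left
    have := hβ.length_le
    omega
  have hp' : (trunc τ (α.length + 1)).label α = some (c, u) := by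
    rw [trunc_label_eq hk]
    exact hp
  obtain ⟨p', h1, h2, h3⟩ := h (α.length + 1) α (c, u) hp'
  refine ⟨p', h1, h2, fun hne β => ?_⟩
  rw [← h3 hne β]
  rcases u with _ | r
  · exact absurd rfl hne
  · exact (trunc_eq_of_some hpt hk hp β).symm

end BigStepMeta
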